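/- Let (E1,q1), (E2,q2), (E3,q3) be metric groups. Let L be a Lagrangian subgroup of E1 ⊕ E2 with respect to the quadratic form (x1,x2) ↦ q1(x1)⁻¹·q2(x2), and let M be a Lagrangian subgroup of E2 ⊕ E3 with respect to (x2,x3) ↦ q2(x2)⁻¹·q3(x3). Define M∘L := {(a1,a3) ∈ E1 ⊕ E3 : ∃ a2 ∈ E2, (a1,a2) ∈ L and (a2,a3) ∈ M}. Then M∘L is a Lagrangian subgroup of E1 ⊕ E3 with respect to the quadratic form (x1,x3) ↦ q1(x1)⁻¹·q3(x3); in particular |M∘L|² = |E1|·|E3|. -/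

import Mathlib

/-- The symmetric bicharacter associated to a quadratic form `q` with values in `ℂˣ`. -/
def bq {M : Type*} [AddCommGroup M] (q : M → ℂˣ) (x y : M) : ℂˣ :=
  q (x + y) * (q x)⁻¹ * (q y)⁻¹

/-- `(M, q)` is a metric group: `q` is even, `b_q` is biadditive and nondegenerate. -/
def IsMetric {M : Type*} [AddCommGroup M] (q : M → ℂˣ) : Prop :=
  (∀ x, q (-x) = q x) ∧
  (∀ x y z, bq q (x + y) z = bq q x z * bq q y z) ∧
  (∀ x y z, bq q x (y + z) = bq q x y * bq q x z) ∧
  (∀ x, (∀ y, bq q x y = 1) → x = 0)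

/-- A subgroup `L` is Lagrangian for `q` if `q = 1` on `L` and `|L|² = |M|`. -/
def IsLagrangian {M : Type*} [AddCommGroup M] (q : M → ℂˣ) (L : AddSubgroup M) : Prop :=
  (∀ x ∈ L, q x = 1) ∧ Nat.card L ^ 2 = Nat.card M

/-- Composition of Lagrangian correspondences (as a set). -/
def compL {E1 E2 E3 : Type*} [AddCommGroup E1] [AddCommGroup E2] [AddCommGroup E3]
    (L : AddSubgroup (E1 × E2)) (M : AddSubgroup (E2 × E3)) : Set (E1 × E3) :=
  {p | ∃ a2 : E2, (p.1, a2) ∈ L ∧ (a2, p.2) ∈ M}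

open Function


lemma dualCard (G : Type*) [CommGroup G] [Finite G] :
    Nat.card (G →* ℂˣ) = Nat.card G := by
  have hne : ((Monoid.exponent G : ℂ)) ≠ 0 :=
    Nat.cast_ne_zero.mpr Monoid.exponent_ne_zero_of_finite
  have : NeZero ((Monoid.exponent G : ℂ)) := ⟨hne⟩
  obtain ⟨e⟩ := CommGroup.monoidHom_mulEquiv_of_hasEnoughRootsOfUnity G ℂ
  exact Nat.card_congr e.toEquiv

lemma resSubtypeSurj {G : Type*} [CommGroup G] [Finite G] (H : Subgroup G) :
    Function.Surjective (fun χ : G →* ℂˣ => χ.comp H.subtype) := by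
  have hfin : Finite (G →* ℂˣ) := by
    refine Nat.finite_of_card_ne_zero ?_
    rw [dualCard]
    exact Nat.card_pos.ne'
  set res : (G →* ℂˣ) →* (↥H →* ℂˣ) :=
    { toFun := fun χ => χ.comp H.subtype
      map_one' := rfl
      map_mul' := fun _ _ => rfl } with hres
  have hker : Nat.card res.ker = Nat.card (G ⧸ H) := by
    rw [← dualCard (G ⧸ H)]
    refine (Nat.card_congr (Equiv.ofBijective
      (fun χ : (G ⧸ H) →* ℂˣ => (⟨χ.comp (QuotientGroup.mk' H), ?_⟩ : res.ker)) ⟨?_, ?_⟩)).symm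
    · rw [MonoidHom.mem_ker]
      refine MonoidHom.ext fun h => ?_
      show χ (QuotientGroup.mk' H (H.subtype h)) = 1
      have hh : ((H.subtype h : G) : G ⧸ H) = 1 := (QuotientGroup.eq_one_iff _).mpr h.2
      rw [QuotientGroup.mk'_apply, hh, map_one]
    · intro χ₁ χ₂ h
      have := congrArg Subtype.val h
      exact (MonoidHom.cancel_right (QuotientGroup.mk'_surjective H)).mp this
    · rintro ⟨ψ, hψ⟩
      have hψ' : ∀ x ∈ H, ψ x = 1 := by
        intro x hx
        have := DFunLike.congr_fun (MonoidHom.mem_ker.mp hψ) (⟨x, hx⟩ : H)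
        simpa [hres] using this
      refine ⟨QuotientGroup.lift H ψ hψ', ?_⟩
      apply Subtype.ext
      ext g
      simp
      rfl
  have h1 : Nat.card (G →* ℂˣ) = Nat.card ((G →* ℂˣ) ⧸ res.ker) * Nat.card res.ker :=
    Subgroup.card_eq_card_quotient_mul_card_subgroup res.ker
  have h2 : Nat.card ((G →* ℂˣ) ⧸ res.ker) = Nat.card res.range :=
    Nat.card_congr (QuotientGroup.quotientKerEquivRange res).toEquiv
  have h3 : Nat.card G = Nat.card (G ⧸ H) * Nat.card H :=
    Subgroup.card_eq_card_quotient_mul_card_subgroup H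
  have hq : 0 < Nat.card (G ⧸ H) := Nat.card_pos
  have h4 : Nat.card res.range * Nat.card (G ⧸ H) = Nat.card H * Nat.card (G ⧸ H) := by
    rw [h2, hker, dualCard G] at h1
    rw [h1.symm.trans h3]
    exact Nat.mul_comm _ _
  have h5 : Nat.card res.range = Nat.card (↥H →* ℂˣ) := by
    rw [dualCard]
    exact Nat.eq_of_mul_eq_mul_right hq h4
  have hfin2 : Finite (↥H →* ℂˣ) := by
    refine Nat.finite_of_card_ne_zero ?_
    rw [dualCard]
    exact Nat.card_pos.ne'
  have : res.range = ⊤ := Subgroup.eq_top_of_card_eq _ h5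
  intro ψ
  have : ψ ∈ res.range := this ▸ Subgroup.mem_top ψ
  exact this


lemma compSurj {K G : Type*} [CommGroup K] [CommGroup G] [Finite G] (f : K →* G)
    (hf : Injective f) : Surjective (fun χ : G →* ℂˣ => χ.comp f) := by
  intro ψ
  let e := MonoidHom.ofInjective hf
  obtain ⟨χ, hχ⟩ := resSubtypeSurj f.range (ψ.comp e.symm.toMonoidHom)
  refine ⟨χ, ?_⟩
  refine MonoidHom.ext fun k => ?_
  have hχ' : χ.comp f.range.subtype = ψ.comp e.symm.toMonoidHom := hχ
  have h1 : (χ.comp f.range.subtype) (e k) = ψ (e.symm (e k)) := DFunLike.congr_fun hχ' (e k)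
  rw [MulEquiv.symm_apply_apply] at h1
  have h2 : (f.range.subtype) (e k) = f k := by
    simp [e, MonoidHom.ofInjective_apply]
  show χ (f k) = ψ k
  rw [← h2]
  exact h1

lemma card_perp {E : Type*} [AddCommGroup E] [Fintype E] (b : E → E → ℂˣ)
    (hb1 : ∀ x y z, b (x + y) z = b x z * b y z)
    (hb2 : ∀ x y z, b x (y + z) = b x y * b x z)
    (hnd : ∀ x, (∀ y, b x y = 1) → x = 0)
    (H : AddSubgroup E) (P : AddSubgroup E)
    (hP : ∀ x, x ∈ P ↔ ∀ h ∈ H, b x h = 1) :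
    Nat.card P * Nat.card H = Nat.card E := by
  have hb0 : ∀ z, b 0 z = 1 := by
    intro z
    have h := hb1 0 0 z
    rw [add_zero] at h
    exact left_eq_mul.mp h
  have hbneg : ∀ x z, b (-x) z = (b x z)⁻¹ := by
    intro x z
    refine eq_inv_of_mul_eq_one_right ?_
    rw [← hb1, add_neg_cancel, hb0]
  -- the full dual map
  set Φ : Multiplicative E →* (Multiplicative E →* ℂˣ) :=
    MonoidHom.mk' (fun x => MonoidHom.mk' (fun y => b x.toAdd y.toAdd)
      (fun y z => hb2 x.toAdd y.toAdd z.toAdd))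
      (fun x y => MonoidHom.ext fun z => hb1 x.toAdd y.toAdd z.toAdd) with hΦ
  have hΦapp : ∀ x y, Φ x y = b x.toAdd y.toAdd := fun _ _ => rfl
  have hΦinj : Injective Φ := by
    intro x y h
    have hxy : ∀ z : E, b x.toAdd z = b y.toAdd z := fun z =>
      DFunLike.congr_fun h (Multiplicative.ofAdd z)
    have : x.toAdd - y.toAdd = 0 := by
      refine hnd _ fun z => ?_
      rw [sub_eq_add_neg, hb1, hbneg, hxy, mul_inv_cancel]
    have : x.toAdd = y.toAdd := sub_eq_zero.mp this
    exact Multiplicative.toAdd.injective this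
  have hfin' : Finite (Multiplicative E →* ℂˣ) :=
    Nat.finite_of_card_ne_zero (by rw [dualCard]; exact Nat.card_pos.ne')
  have hcards : Nat.card (Multiplicative E) = Nat.card (Multiplicative E →* ℂˣ) :=
    (dualCard (Multiplicative E)).symm
  have hΦbij : Bijective Φ :=
    (Nat.bijective_iff_injective_and_card Φ).mpr ⟨hΦinj, hcards⟩
  -- restriction to H
  set j : Multiplicative ↥H →* Multiplicative E := AddMonoidHom.toMultiplicative H.subtype
    with hj
  have hjinj : Injective j := fun a c h => by
    have : (a.toAdd : E) = (c.toAdd : E) := congrArg Multiplicative.toAdd h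
    exact congrArg Multiplicative.ofAdd (Subtype.ext this)
  set F : Multiplicative E →* (Multiplicative ↥H →* ℂˣ) :=
    MonoidHom.mk' (fun x => (Φ x).comp j)
      (fun x y => MonoidHom.ext fun z => hb1 x.toAdd y.toAdd (j z).toAdd) with hF
  have hFsurj : Surjective F := by
    intro ψ
    obtain ⟨χ, hχ⟩ := compSurj j hjinj ψ
    obtain ⟨x, hx⟩ := hΦbij.2 χ
    refine ⟨x, ?_⟩
    have : F x = (Φ x).comp j := rfl
    rw [this, hx]
    exact hχ
  have hkermem : ∀ x : Multiplicative E, x ∈ F.ker ↔ x.toAdd ∈ P := by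
    intro x
    rw [MonoidHom.mem_ker, hP]
    constructor
    · intro h y hy
      have := DFunLike.congr_fun h (Multiplicative.ofAdd (⟨y, hy⟩ : ↥H))
      exact this
    · intro h
      refine MonoidHom.ext fun y => ?_
      have := h (y.toAdd : E) (y.toAdd).2
      exact this
  have hkercard : Nat.card F.ker = Nat.card P := by
    refine Nat.card_congr (Equiv.ofBijective
      (fun x : F.ker => (⟨x.1.toAdd, (hkermem x.1).mp x.2⟩ : P)) ⟨?_, ?_⟩)
    · intro a c h
      exact Subtype.ext (congrArg (fun p : ↥P => Multiplicative.ofAdd p.1) h)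
    · intro p
      exact ⟨⟨Multiplicative.ofAdd p.1, (hkermem _).mpr p.2⟩, rfl⟩
  have h1 : Nat.card (Multiplicative E) = Nat.card (Multiplicative E ⧸ F.ker) * Nat.card F.ker :=
    Subgroup.card_eq_card_quotient_mul_card_subgroup F.ker
  have h2 : Nat.card (Multiplicative E ⧸ F.ker) = Nat.card (Multiplicative ↥H →* ℂˣ) :=
    Nat.card_congr (QuotientGroup.quotientKerEquivOfSurjective F hFsurj).toEquiv
  rw [h2, dualCard (Multiplicative ↥H), hkercard] at h1
  have hE : Nat.card (Multiplicative E) = Nat.card E := Nat.card_congr Multiplicative.toAdd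
  have hH : Nat.card (Multiplicative ↥H) = Nat.card ↥H := Nat.card_congr Multiplicative.toAdd
  rw [hE, hH] at h1
  rw [h1, Nat.mul_comm]


lemma bq_split {A B : Type*} [AddCommGroup A] [AddCommGroup B] (qa : A → ℂˣ) (qb : B → ℂˣ)
    (p p' : A × B) :
    bq (fun x : A × B => qa x.1 * qb x.2) p p' = bq qa p.1 p'.1 * bq qb p.2 p'.2 := by
  simp only [bq, Prod.fst_add, Prod.snd_add, mul_inv]
  simp [mul_comm, mul_assoc, mul_left_comm]

lemma bq_inv {A : Type*} [AddCommGroup A] (q : A → ℂˣ) (x y : A) :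
    bq (fun a => (q a)⁻¹) x y = (bq q x y)⁻¹ := by
  simp only [bq, mul_inv]

-- the form (q1)⁻¹ ⊕ q2
lemma bq_split' {A B : Type*} [AddCommGroup A] [AddCommGroup B] (qa : A → ℂˣ) (qb : B → ℂˣ)
    (p p' : A × B) :
    bq (fun x : A × B => (qa x.1)⁻¹ * qb x.2) p p' = (bq qa p.1 p'.1)⁻¹ * bq qb p.2 p'.2 := by
  refine (bq_split (fun a => (qa a)⁻¹) qb p p').trans ?_
  rw [bq_inv]

lemma bq_zero_right {A : Type*} [AddCommGroup A] {q : A → ℂˣ}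
    (hb2 : ∀ x y z, bq q x (y + z) = bq q x y * bq q x z) (x : A) : bq q x 0 = 1 := by
  have h := hb2 x 0 0
  rw [add_zero] at h
  exact left_eq_mul.mp h

lemma bq_zero_left {A : Type*} [AddCommGroup A] {q : A → ℂˣ}
    (hb1 : ∀ x y z, bq q (x + y) z = bq q x z * bq q y z) (y : A) : bq q 0 y = 1 := by
  have h := hb1 0 0 y
  rw [add_zero] at h
  exact left_eq_mul.mp h

lemma bq_neg_right {A : Type*} [AddCommGroup A] {q : A → ℂˣ}
    (hb2 : ∀ x y z, bq q x (y + z) = bq q x y * bq q x z) (x y : A) :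
    bq q x (-y) = (bq q x y)⁻¹ := by
  refine eq_inv_of_mul_eq_one_right ?_
  rw [← hb2, add_neg_cancel, bq_zero_right hb2]

-- pairs in an isotropic subgroup pair to 1
lemma bq_isotropic {A : Type*} [AddCommGroup A] {q : A → ℂˣ} {L : AddSubgroup A}
    (hq : ∀ x ∈ L, q x = 1) {x y : A} (hx : x ∈ L) (hy : y ∈ L) : bq q x y = 1 := by
  rw [bq, hq x hx, hq y hy, hq (x + y) (L.add_mem hx hy)]
  simp

-- a Lagrangian subgroup equals its perp
lemma lagrangian_perp_le {A : Type*} [AddCommGroup A] [Fintype A] {q : A → ℂˣ}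
    (hb1 : ∀ x y z, bq q (x + y) z = bq q x z * bq q y z)
    (hb2 : ∀ x y z, bq q x (y + z) = bq q x y * bq q x z)
    (hnd : ∀ x, (∀ y, bq q x y = 1) → x = 0)
    {L : AddSubgroup A} (hL : IsLagrangian q L)
    {x : A} (hx : ∀ y ∈ L, bq q x y = 1) : x ∈ L := by
  set P : AddSubgroup A :=
    { carrier := {z | ∀ y ∈ L, bq q z y = 1}
      zero_mem' := fun y _ => bq_zero_left hb1 y
      add_mem' := fun {a c} ha hc y hy => by rw [hb1, ha y hy, hc y hy, one_mul]
      neg_mem' := fun {a} ha y hy => by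
        have h := hb1 a (-a) y
        rw [add_neg_cancel, bq_zero_left hb1, ha y hy, one_mul] at h
        exact h.symm } with hPdef
  have hcard : Nat.card P * Nat.card L = Nat.card A :=
    card_perp (bq q) hb1 hb2 hnd L P (fun z => Iff.rfl)
  have hle : L ≤ P := fun a ha y hy => bq_isotropic hL.1 ha hy
  have hcards : Nat.card P = Nat.card L := by
    have h2 := hL.2
    rw [pow_two] at h2
    rw [← h2] at hcard
    exact Nat.eq_of_mul_eq_mul_right Nat.card_pos hcard
  have : (L : Set A) = (P : Set A) := by
    apply Set.eq_of_subset_of_ncard_le hle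
    rw [← Nat.card_coe_set_eq, ← Nat.card_coe_set_eq]
    exact le_of_eq hcards
  have hPL : P = L := (SetLike.ext'_iff.mpr this).symm
  exact hPL ▸ hx

/-- The product form `(qa)⁻¹ ⊕ qb` is biadditive and nondegenerate. -/
lemma metric_opp_prod {A B : Type*} [AddCommGroup A] [AddCommGroup B] {qa : A → ℂˣ}
    {qb : B → ℂˣ} (ha : IsMetric qa) (hb : IsMetric qb) :
    (∀ x y z : A × B, bq (fun p : A × B => (qa p.1)⁻¹ * qb p.2) (x + y) z =
        bq (fun p : A × B => (qa p.1)⁻¹ * qb p.2) x z *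
        bq (fun p : A × B => (qa p.1)⁻¹ * qb p.2) y z) ∧
    (∀ x y z : A × B, bq (fun p : A × B => (qa p.1)⁻¹ * qb p.2) x (y + z) =
        bq (fun p : A × B => (qa p.1)⁻¹ * qb p.2) x y *
        bq (fun p : A × B => (qa p.1)⁻¹ * qb p.2) x z) ∧
    (∀ x : A × B, (∀ y, bq (fun p : A × B => (qa p.1)⁻¹ * qb p.2) x y = 1) → x = 0) := by
  refine ⟨?_, ?_, ?_⟩
  · intro x y z
    rw [bq_split', bq_split', bq_split', Prod.fst_add, Prod.snd_add, ha.2.1, hb.2.1, mul_inv,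
      mul_mul_mul_comm]
  · intro x y z
    rw [bq_split', bq_split', bq_split', Prod.fst_add, Prod.snd_add, ha.2.2.1, hb.2.2.1, mul_inv,
      mul_mul_mul_comm]
  · intro x hx
    have hxa : x.1 = 0 := by
      refine ha.2.2.2 x.1 fun y1 => ?_
      have h := hx (y1, 0)
      rw [bq_split'] at h
      rw [bq_zero_right hb.2.2.1, mul_one] at h
      exact inv_eq_one.mp h
    have hxb : x.2 = 0 := by
      refine hb.2.2.2 x.2 fun y2 => ?_
      have h := hx (0, y2)
      rw [bq_split'] at h
      rw [bq_zero_right ha.2.2.1, inv_one, one_mul] at h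
      exact h
    exact Prod.ext hxa hxb

/-- The composition `M∘L` of Lagrangian correspondences is a Lagrangian subgroup of
`E1 ⊕ E3` for the form `(x1,x3) ↦ q1(x1)⁻¹·q3(x3)`; in particular `|M∘L|² = |E1|·|E3|`. -/
theorem stmt7 {E1 E2 E3 : Type*} [AddCommGroup E1] [Fintype E1]
    [AddCommGroup E2] [Fintype E2] [AddCommGroup E3] [Fintype E3]
    (q1 : E1 → ℂˣ) (q2 : E2 → ℂˣ) (q3 : E3 → ℂˣ)
    (h1 : IsMetric q1) (h2 : IsMetric q2) (h3 : IsMetric q3)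
    (L : AddSubgroup (E1 × E2)) (M : AddSubgroup (E2 × E3))
    (hL : IsLagrangian (fun p : E1 × E2 => (q1 p.1)⁻¹ * q2 p.2) L)
    (hM : IsLagrangian (fun p : E2 × E3 => (q2 p.1)⁻¹ * q3 p.2) M) :
    ∃ K : AddSubgroup (E1 × E3), (K : Set (E1 × E3)) = compL L M ∧
      IsLagrangian (fun p : E1 × E3 => (q1 p.1)⁻¹ * q3 p.2) K ∧
      Nat.card K ^ 2 = Nat.card E1 * Nat.card E3 := by
  obtain ⟨hbL1, hbL2, hbLnd⟩ := metric_opp_prod h1 h2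
  obtain ⟨hbM1, hbM2, hbMnd⟩ := metric_opp_prod h2 h3
  -- the difference homomorphism and the projection
  set φ : ↥L × ↥M →+ E2 := AddMonoidHom.mk'
    (fun lm => (lm.1 : E1 × E2).2 - (lm.2 : E2 × E3).1)
    (by
      intro a c
      simp only [Prod.fst_add, Prod.snd_add, AddSubgroup.coe_add]
      abel) with hφ
  set ψ : ↥L × ↥M →+ E1 × E3 := AddMonoidHom.mk'
    (fun lm => ((lm.1 : E1 × E2).1, (lm.2 : E2 × E3).2))
    (by
      intro a c
      simp only [Prod.fst_add, Prod.snd_add, AddSubgroup.coe_add]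
      rfl) with hψ
  set ψ' : ↥φ.ker →+ E1 × E3 := ψ.comp φ.ker.subtype with hψ'
  -- carrier equality
  have hcar : (ψ'.range : Set (E1 × E3)) = compL L M := by
    ext p
    constructor
    · rintro ⟨⟨⟨l, m⟩, hk⟩, rfl⟩
      have hk' : (l : E1 × E2).2 = (m : E2 × E3).1 := sub_eq_zero.mp hk
      refine ⟨(l : E1 × E2).2, ?_, ?_⟩
      · show ((l : E1 × E2).1, (l : E1 × E2).2) ∈ L
        rw [Prod.mk.eta]
        exact l.2
      · rw [hk']
        show ((m : E2 × E3).1, (m : E2 × E3).2) ∈ M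
        rw [Prod.mk.eta]
        exact m.2
    · rintro ⟨a2, hl, hm⟩
      refine ⟨⟨(⟨(p.1, a2), hl⟩, ⟨(a2, p.2), hm⟩), ?_⟩, ?_⟩
      · show a2 - a2 = 0
        simp
      · rfl
  -- the subgroup D = L0 ∩ M0 of E2
  set D : AddSubgroup E2 :=
    { carrier := {d | ((0 : E1), d) ∈ L ∧ (d, (0 : E3)) ∈ M}
      zero_mem' := ⟨L.zero_mem, M.zero_mem⟩
      add_mem' := fun {a c} haa hcc => by
        constructor
        · have := L.add_mem haa.1 hcc.1
          simpa using this
        · have := M.add_mem haa.2 hcc.2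
          simpa using this
      neg_mem' := fun {a} haa => by
        constructor
        · have := L.neg_mem haa.1
          simpa using this
        · have := M.neg_mem haa.2
          simpa using this } with hD
  -- D is the orthogonal complement of the range of φ
  have hD_perp : ∀ x, x ∈ D ↔ ∀ h ∈ φ.range, bq q2 x h = 1 := by
    intro x
    constructor
    · rintro hx h ⟨⟨l, m⟩, rfl⟩
      show bq q2 x ((l : E1 × E2).2 - (m : E2 × E3).1) = 1
      rw [sub_eq_add_neg, h2.2.2.1, bq_neg_right h2.2.2.1]
      have hxl : bq q2 x (l : E1 × E2).2 = 1 := by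
        have hiso := bq_isotropic hL.1 hx.1 l.2
        rw [bq_split'] at hiso
        rwa [bq_zero_left h1.2.1, inv_one, one_mul] at hiso
      have hxm : bq q2 x (m : E2 × E3).1 = 1 := by
        have hiso := bq_isotropic hM.1 hx.2 m.2
        rw [bq_split'] at hiso
        rw [bq_zero_left h3.2.1, mul_one] at hiso
        exact inv_eq_one.mp hiso
      rw [hxl, hxm, inv_one, mul_one]
    · intro hx
      constructor
      · refine lagrangian_perp_le hbL1 hbL2 hbLnd hL fun y hy => ?_
        rw [bq_split', bq_zero_left h1.2.1, inv_one, one_mul]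
        refine hx y.2 ⟨(⟨y, hy⟩, 0), ?_⟩
        show (y.2 : E2) - ((0 : ↥M) : E2 × E3).1 = y.2
        simp
      · refine lagrangian_perp_le hbM1 hbM2 hbMnd hM fun y hy => ?_
        rw [bq_split']
        show (bq q2 x y.1)⁻¹ * bq q3 0 y.2 = 1
        rw [bq_zero_left h3.2.1, mul_one, inv_eq_one]
        have := hx (-y.1) ⟨((0 : ↥L), ⟨y, hy⟩), by
          show ((0 : ↥L) : E1 × E2).2 - y.1 = -y.1
          simp⟩
        rw [bq_neg_right h2.2.2.1, inv_eq_one] at this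
        exact this
  -- counting
  have hDR : Nat.card D * Nat.card φ.range = Nat.card E2 :=
    card_perp (bq q2) h2.2.1 h2.2.2.1 h2.2.2.2 φ.range D hD_perp
  have hLM : Nat.card (↥L × ↥M) = Nat.card φ.range * Nat.card φ.ker := by
    have h := AddSubgroup.card_eq_card_quotient_mul_card_addSubgroup φ.ker
    rwa [Nat.card_congr (QuotientAddGroup.quotientKerEquivRange φ).toEquiv] at h
  have hkk : Nat.card φ.ker = Nat.card ψ'.range * Nat.card ψ'.ker := by
    have h := AddSubgroup.card_eq_card_quotient_mul_card_addSubgroup ψ'.ker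
    rwa [Nat.card_congr (QuotientAddGroup.quotientKerEquivRange ψ').toEquiv] at h
  have hDk : Nat.card ψ'.ker = Nat.card D := by
    have hmem : ∀ k : ↥ψ'.ker, ((k.1.1.1 : E1 × E2).2 ∈ D) := by
      rintro ⟨⟨⟨l, m⟩, hk⟩, hk2⟩
      have hk' : (l : E1 × E2).2 = (m : E2 × E3).1 := sub_eq_zero.mp hk
      have h12 : ((l : E1 × E2).1, (m : E2 × E3).2) = ((0, 0) : E1 × E3) := hk2
      constructor
      · have hle : ((0 : E1), (l : E1 × E2).2) = (l : E1 × E2) :=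
          Prod.ext (congrArg Prod.fst h12).symm rfl
        rw [hle]
        exact l.2
      · have hme : ((l : E1 × E2).2, (0 : E3)) = (m : E2 × E3) :=
          Prod.ext hk' (congrArg Prod.snd h12).symm
        rw [hme]
        exact m.2
    refine Nat.card_congr (Equiv.ofBijective
      (fun k : ↥ψ'.ker => (⟨_, hmem k⟩ : ↥D)) ⟨?_, ?_⟩)
    · rintro ⟨⟨⟨l, m⟩, hk⟩, hk2⟩ ⟨⟨⟨l', m'⟩, hk3⟩, hk4⟩ h
      have hval : (l : E1 × E2).2 = (l' : E1 × E2).2 := congrArg Subtype.val h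
      have h12 : ((l : E1 × E2).1, (m : E2 × E3).2) = ((0, 0) : E1 × E3) := hk2
      have h12' : ((l' : E1 × E2).1, (m' : E2 × E3).2) = ((0, 0) : E1 × E3) := hk4
      have hle : (l : E1 × E2) = (l' : E1 × E2) := by
        refine Prod.ext ?_ hval
        rw [congrArg Prod.fst h12, congrArg Prod.fst h12']
      have hme : (m : E2 × E3) = (m' : E2 × E3) := by
        refine Prod.ext ?_ ?_
        · rw [← sub_eq_zero.mp hk, ← sub_eq_zero.mp hk3, hval]
        · rw [congrArg Prod.snd h12, congrArg Prod.snd h12']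
      apply Subtype.ext
      apply Subtype.ext
      exact Prod.ext (Subtype.ext hle) (Subtype.ext hme)
    · rintro ⟨d, hd1, hd2⟩
      refine ⟨⟨⟨(⟨(0, d), hd1⟩, ⟨(d, 0), hd2⟩), ?_⟩, ?_⟩, rfl⟩
      · show d - d = 0
        simp
      · show (((0 : E1), (0 : E3)) : E1 × E3) = 0
        rfl
  -- the key identity |K| * |E2| = |L| * |M|
  have hKE2 : Nat.card ψ'.range * Nat.card E2 = Nat.card L * Nat.card M := by
    have hprod : Nat.card (↥L × ↥M) = Nat.card L * Nat.card M := Nat.card_prod _ _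
    rw [← hDR, ← hprod, hLM, hkk, hDk]
    ring
  have hE2pos : 0 < Nat.card E2 := Nat.card_pos
  have hKsq : Nat.card ψ'.range ^ 2 = Nat.card E1 * Nat.card E3 := by
    have hL2 : Nat.card L ^ 2 = Nat.card E1 * Nat.card E2 := by
      rw [hL.2, Nat.card_prod]
    have hM2 : Nat.card M ^ 2 = Nat.card E2 * Nat.card E3 := by
      rw [hM.2, Nat.card_prod]
    have hsq : Nat.card ψ'.range ^ 2 * Nat.card E2 ^ 2 =
        (Nat.card E1 * Nat.card E3) * Nat.card E2 ^ 2 := by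
      calc Nat.card ψ'.range ^ 2 * Nat.card E2 ^ 2
          = (Nat.card ψ'.range * Nat.card E2) ^ 2 := (mul_pow _ _ 2).symm
        _ = (Nat.card L * Nat.card M) ^ 2 := by rw [hKE2]
        _ = Nat.card L ^ 2 * Nat.card M ^ 2 := mul_pow _ _ 2
        _ = (Nat.card E1 * Nat.card E2) * (Nat.card E2 * Nat.card E3) := by rw [hL2, hM2]
        _ = (Nat.card E1 * Nat.card E3) * Nat.card E2 ^ 2 := by ring
    exact Nat.eq_of_mul_eq_mul_right (by positivity) hsq
  -- isotropy
  have hiso : ∀ p ∈ ψ'.range, (q1 p.1)⁻¹ * q3 p.2 = 1 := by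
    intro p hp
    have hp' : p ∈ compL L M := by
      rw [← hcar]
      exact hp
    obtain ⟨a2, hl, hm⟩ := hp'
    have e1 : (q1 p.1)⁻¹ * q2 a2 = 1 := hL.1 _ hl
    have e2 : (q2 a2)⁻¹ * q3 p.2 = 1 := hM.1 _ hm
    have : ((q1 p.1)⁻¹ * q2 a2) * ((q2 a2)⁻¹ * q3 p.2) = (q1 p.1)⁻¹ * q3 p.2 := by
      group
    rw [← this, e1, e2, one_mul]
  exact ⟨ψ'.range, hcar, ⟨hiso, by rw [hKsq, Nat.card_prod]⟩, hKsq⟩
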